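/- Let S be an ordered abelian semigroup in the category Cu with largest element ∞ (= ∞·(full element)) and let n ≥ 1. An element u ∈ S is (ω,n)-decomposable if there exist x_1, x_2, … with Σ_{i=1}^∞ x_i ≤ u and u ≤ n·x_i for all i. Then u is (ω,n)-decomposable if and only if there exist x_1, x_2, … with Σ_{i=1}^∞ x_i ≤ u and n·x_i = ∞·u for all i. -/

import Mathlib

variable {S : Type*}

/-- The infinite sum `Σ_{i=0}^∞ x i`, defined as the supremum of the partial sums. -/
noncomputable def iSum [CompleteLattice S] [AddCommMonoid S] (x : ℕ → S) : S :=
  ⨆ k : ℕ, ∑ i ∈ Finset.range k, x i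

/-- `∞ • u`, defined as the supremum of the multiples `k • u`. -/
noncomputable def inftyMul [CompleteLattice S] [AddCommMonoid S] (u : S) : S :=
  ⨆ k : ℕ, k • u

/-- Let `S` be an ordered abelian semigroup in Cu in which increasing
suprema exist and addition is compatible with them, and let `n ≥ 1`.  An element `u` is
`(ω,n)`-decomposable iff there exist `x 1, x 2, …` with `Σᵢ x i ≤ u` and
`n • x i = ∞ • u` for all `i`. -/
theorem omega_n_decomposable_iff [CompleteLattice S] [AddCommMonoid S]
    [CovariantClass S S (· + ·) (· ≤ ·)]
    (hpos : ∀ s : S, 0 ≤ s)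
    (hA4 : ∀ (a : S) (f : ℕ → S), Monotone f → a + (⨆ i, f i) = ⨆ i, a + f i)
    (n : ℕ) (hn : 1 ≤ n) (u : S) :
    (∃ x : ℕ → S, iSum x ≤ u ∧ ∀ i, u ≤ n • x i) ↔
      (∃ x : ℕ → S, iSum x ≤ u ∧ ∀ i, n • x i = inftyMul u) := by
  classical
  have hadd : ∀ {a b c d : S}, a ≤ b → c ≤ d → a + c ≤ b + d := by
    intro a b c d h1 h2
    calc a + c ≤ a + d := add_le_add_right h2 a
      _ = d + a := add_comm _ _
      _ ≤ d + b := add_le_add_right h1 d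
      _ = b + d := add_comm _ _
  have hsumle : ∀ (s : Finset ℕ) (f g : ℕ → S), (∀ i ∈ s, f i ≤ g i) →
      ∑ i ∈ s, f i ≤ ∑ i ∈ s, g i := by
    intro s f g h
    induction s using Finset.induction_on with
    | empty => simp
    | insert _ _ hnm ih =>
      rw [Finset.sum_insert hnm, Finset.sum_insert hnm]
      exact hadd (h _ (Finset.mem_insert_self _ _))
        (ih (fun i hi => h i (Finset.mem_insert_of_mem hi)))
  have hsubset : ∀ (x : ℕ → S) (T U : Finset ℕ), T ⊆ U →
      ∑ t ∈ T, x t ≤ ∑ t ∈ U, x t := by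
    intro x T U hTU
    rw [← Finset.sum_sdiff hTU]
    calc ∑ t ∈ T, x t ≤ ∑ t ∈ U \ T, x t + ∑ t ∈ T, x t :=
          le_add_of_nonneg_left (hpos _)
      _ = _ := rfl
  have hnsmul : ∀ (m : ℕ) {a b : S}, a ≤ b → m • a ≤ m • b := by
    intro m
    induction m with
    | zero => intro a b _; simp
    | succ m ih =>
      intro a b h
      rw [succ_nsmul, succ_nsmul]
      exact hadd (ih h) h
  -- partial sums of any family are bounded by iSum
  have hfin : ∀ (x : ℕ → S) (T : Finset ℕ), ∑ t ∈ T, x t ≤ iSum x := by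
    intro x T
    have hsub : T ⊆ Finset.range (T.sup id + 1) := by
      intro t ht
      simp only [Finset.mem_range]
      exact Nat.lt_succ_of_le (Finset.le_sup (f := id) ht)
    calc ∑ t ∈ T, x t ≤ ∑ i ∈ Finset.range (T.sup id + 1), x i := hsubset x _ _ hsub
      _ ≤ iSum x := le_iSup (fun k => ∑ i ∈ Finset.range k, x i) _
  -- partial sums are monotone
  have hmono : ∀ (y : ℕ → S), Monotone (fun m => ∑ i ∈ Finset.range m, y i) := by
    intro y
    apply monotone_nat_of_le_succ
    intro m
    rw [Finset.sum_range_succ]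
    exact le_add_of_nonneg_right (hpos _)
  -- finite sums of monotone suprema
  have hswap : ∀ (k : ℕ) (f : ℕ → ℕ → S), (∀ j, Monotone (f j)) →
      ∑ j ∈ Finset.range k, (⨆ m, f j m) = ⨆ m, ∑ j ∈ Finset.range k, f j m := by
    intro k f hf
    induction k with
    | zero => simp
    | succ k ih =>
      have hS : Monotone (fun m => ∑ j ∈ Finset.range k, f j m) :=
        fun a b hab => hsumle _ _ _ (fun j _ => hf j hab)
      rw [Finset.sum_range_succ, ih, hA4 _ _ (hf k)]
      have hstep : ∀ m, (⨆ m', ∑ j ∈ Finset.range k, f j m') + f k m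
          = ⨆ m', (∑ j ∈ Finset.range k, f j m') + f k m := by
        intro m
        rw [add_comm, hA4 _ _ hS]
        exact iSup_congr fun m' => add_comm _ _
      simp only [hstep]
      apply le_antisymm
      · apply iSup_le; intro m; apply iSup_le; intro m'
        apply le_iSup_of_le (max m m')
        conv_rhs => rw [Finset.sum_range_succ]
        exact hadd (hS (le_max_right m m')) (hf k (le_max_left m m'))
      · apply iSup_le; intro m
        apply le_iSup_of_le m
        apply le_iSup_of_le m
        rw [Finset.sum_range_succ]
  constructor
  · rintro ⟨x, hsum, hx⟩
    set x' : ℕ → S := fun j => iSum (fun i => x (Nat.pair j i)) with hx'def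
    have hxle : ∀ j, x' j ≤ u := by
      intro j
      apply iSup_le
      intro m
      have : ∑ i ∈ Finset.range m, x (Nat.pair j i)
          = ∑ t ∈ (Finset.range m).image (Nat.pair j), x t := by
        rw [Finset.sum_image]
        intro a _ b _ hab
        exact (Nat.pair_eq_pair.mp hab).2
      rw [this]
      exact (hfin x _).trans hsum
    refine ⟨x', ?_, fun j => ?_⟩
    · apply iSup_le
      intro k
      have hkey : ∑ j ∈ Finset.range k, x' j
          = ⨆ m, ∑ j ∈ Finset.range k, ∑ i ∈ Finset.range m, x (Nat.pair j i) :=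
        hswap k (fun j m => ∑ i ∈ Finset.range m, x (Nat.pair j i))
          (fun j => hmono _)
      rw [hkey]
      apply iSup_le
      intro m
      have h1 : ∑ j ∈ Finset.range k, ∑ i ∈ Finset.range m, x (Nat.pair j i)
          = ∑ p ∈ Finset.range k ×ˢ Finset.range m, x (Nat.pair p.1 p.2) := by
        rw [Finset.sum_product]
      have h2 : ∑ p ∈ Finset.range k ×ˢ Finset.range m, x (Nat.pair p.1 p.2)
          = ∑ t ∈ (Finset.range k ×ˢ Finset.range m).image (fun p => Nat.pair p.1 p.2),
              x t := by
        rw [Finset.sum_image]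
        intro a _ b _ hab
        have := Nat.pair_eq_pair.mp hab
        exact Prod.ext this.1 this.2
      rw [h1, h2]
      exact (hfin x _).trans hsum
    · apply le_antisymm
      · calc n • x' j ≤ n • u := hnsmul n (hxle j)
          _ ≤ inftyMul u := le_iSup (fun k => k • u) n
      · apply iSup_le
        intro k
        calc k • u = ∑ _i ∈ Finset.range k, u := by
              rw [Finset.sum_const, Finset.card_range]
          _ ≤ ∑ i ∈ Finset.range k, n • x (Nat.pair j i) :=
              hsumle _ _ _ (fun i _ => hx (Nat.pair j i))
          _ = n • ∑ i ∈ Finset.range k, x (Nat.pair j i) := by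
              rw [Finset.smul_sum]
          _ ≤ n • x' j :=
              hnsmul n (le_iSup (fun m => ∑ i ∈ Finset.range m,
                x (Nat.pair j i)) k)
  · rintro ⟨x, hsum, hx⟩
    refine ⟨x, hsum, fun i => ?_⟩
    rw [hx i]
    calc u = (1 : ℕ) • u := (one_nsmul u).symm
      _ ≤ inftyMul u := le_iSup (fun k => k • u) 1
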